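/- arXiv:2112.05042 — 2 statements merged into one kernel-verified Lean document; each statement's English description precedes it below -/
import Mathlib

section
/- Let T be a finite subset of R^d of size at least 3, let F be a countable family of 2d-variate real polynomials such that f(p, q) ≠ 0 for every f in F and all distinct p, q in T, and let k be a positive integer. Then there exists a finite set X ⊂ R^d such that f(p, q) ≠ 0 for every f in F and all distinct p, q in X, and every k-coloring of X contains a monochromatic homothetic copy of T. -/
open MvPolynomial in
private lemma grid_fin : ∀ (n : ℕ) (P : MvPolynomial (Fin n) ℝ), P ≠ 0 →
    ∀ S : Fin n → Set ℝ, (∀ i, (S i).Infinite) →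
    ∃ x : Fin n → ℝ, (∀ i, x i ∈ S i) ∧ MvPolynomial.eval x P ≠ 0 := by
  intro n
  induction n with
  | zero =>
    intro P hP S _
    obtain ⟨a, rfl⟩ := MvPolynomial.C_surjective (Fin 0) P
    refine ⟨fun i => i.elim0, fun i => i.elim0, ?_⟩
    simp only [eval_C]
    exact fun h => hP (by simp [h])
  | succ n ih =>
    intro P hP S hS
    set q := MvPolynomial.finSuccEquiv ℝ n P with hq
    have hq0 : q ≠ 0 := by
      intro h
      apply hP
      apply (MvPolynomial.finSuccEquiv ℝ n).injective
      rw [← hq, h]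
      simp
    obtain ⟨m, hm⟩ : ∃ m, q.coeff m ≠ 0 := by
      by_contra h
      push_neg at h
      exact hq0 (Polynomial.ext h)
    obtain ⟨x, hxS, hxne⟩ := ih (q.coeff m) hm (fun i => S i.succ) (fun i => hS i.succ)
    set q' := q.map (MvPolynomial.eval x) with hq'
    have hq'0 : q' ≠ 0 := by
      intro h
      apply hxne
      have := congrArg (fun p => Polynomial.coeff p m) h
      simpa [hq', Polynomial.coeff_map] using this
    have hroots : {y : ℝ | q'.IsRoot y}.Finite := Polynomial.finite_setOf_isRoot hq'0
    obtain ⟨y, hy⟩ := ((hS 0).diff hroots).nonempty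
    refine ⟨Fin.cons y x, ?_, ?_⟩
    · intro i
      refine Fin.cases ?_ ?_ i
      · simpa using hy.1
      · intro j; simpa using hxS j
    · rw [MvPolynomial.eval_eq_eval_mv_eval']
      exact hy.2

open MvPolynomial in
private lemma grid_gen {ι : Type} [Fintype ι] (P : MvPolynomial ι ℝ) (hP : P ≠ 0)
    (S : ι → Set ℝ) (hS : ∀ i, (S i).Infinite) :
    ∃ x : ι → ℝ, (∀ i, x i ∈ S i) ∧ MvPolynomial.eval x P ≠ 0 := by
  classical
  let e := Fintype.equivFin ι
  have hQ : MvPolynomial.rename e P ≠ 0 := by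
    intro h
    exact hP (MvPolynomial.rename_injective _ e.injective (by simpa using h))
  obtain ⟨x, hxS, hx⟩ := grid_fin _ _ hQ (fun i => S (e.symm i)) (fun i => hS _)
  refine ⟨x ∘ e, fun i => by simpa using hxS (e i), ?_⟩
  rwa [MvPolynomial.eval_rename] at hx

open MvPolynomial in
private lemma dense_ne {ι : Type} [Fintype ι] (P : MvPolynomial ι ℝ) (hP : P ≠ 0) :
    Dense {x : ι → ℝ | MvPolynomial.eval x P ≠ 0} := by
  rw [Metric.dense_iff]
  intro x r hr
  obtain ⟨y, hy, hne⟩ := grid_gen P hP (fun i => Metric.ball (x i) r)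
    (fun i => by
      show (Metric.ball (x i) r).Infinite
      rw [Real.ball_eq_Ioo]; exact Set.Ioo_infinite (by linarith))
  refine ⟨y, ?_, hne⟩
  rw [Metric.mem_ball, dist_pi_lt_iff hr]
  intro i
  simpa [Metric.mem_ball] using hy i

open MvPolynomial in
private lemma open_ne {ι : Type} [Fintype ι] (P : MvPolynomial ι ℝ) :
    IsOpen {x : ι → ℝ | MvPolynomial.eval x P ≠ 0} :=
  isOpen_ne.preimage (MvPolynomial.continuous_eval P)

open MvPolynomial in
private lemma exists_good {ι J : Type} [Fintype ι] [Countable J]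
    (G : J → MvPolynomial ι ℝ) (hG : ∀ j, G j ≠ 0) :
    ∃ ε : ι → ℝ, (∀ i, 0 < ε i) ∧ ∀ j, MvPolynomial.eval ε (G j) ≠ 0 := by
  have hd : Dense (⋂ j, {x : ι → ℝ | MvPolynomial.eval x (G j) ≠ 0}) :=
    dense_iInter_of_isOpen (fun j => open_ne (G j)) (fun j => dense_ne (G j) (hG j))
  have hU : IsOpen {x : ι → ℝ | ∀ i, 0 < x i} := by
    have : {x : ι → ℝ | ∀ i, 0 < x i} = ⋂ i, (fun x : ι → ℝ => x i) ⁻¹' Set.Ioi 0 := by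
      ext y; simp [Set.mem_iInter]
    rw [this]
    exact isOpen_iInter_of_finite fun i => (continuous_apply i).isOpen_preimage _ isOpen_Ioi
  obtain ⟨ε, hεU, hεD⟩ := hd.inter_open_nonempty _ hU ⟨fun _ => 1, fun _ => one_pos⟩
  exact ⟨ε, hεU, fun j => Set.mem_iInter.mp hεD j⟩

/-- `T'` is a homothetic copy of `T` in `ℝ^d`. -/
def IsHomotheticCopy {d : ℕ} (T T' : Set (Fin d → ℝ)) : Prop :=
  ∃ (p : Fin d → ℝ) (l : ℝ), 0 < l ∧ T' = (fun q => p + l • q) '' T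

/-- A countable family of `2d`-variate polynomials respects a set `S ⊆ ℝ^d`. -/
def Respects {d : ℕ} (F : ℕ → MvPolynomial (Fin d ⊕ Fin d) ℝ)
    (S : Set (Fin d → ℝ)) : Prop :=
  ∀ i, ∀ p ∈ S, ∀ q ∈ S, p ≠ q → MvPolynomial.eval (Sum.elim p q) (F i) ≠ 0

theorem stmt_12 (d : ℕ) (T : Set (Fin d → ℝ)) (hTfin : T.Finite) (hT3 : 3 ≤ T.ncard)
    (F : ℕ → MvPolynomial (Fin d ⊕ Fin d) ℝ) (hF : Respects F T) (k : ℕ) (hk : 0 < k) :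
    ∃ X : Set (Fin d → ℝ), X.Finite ∧ Respects F X ∧
      ∀ χ : (Fin d → ℝ) → Fin k, ∃ T' ⊆ X, IsHomotheticCopy T T' ∧
        ∀ p ∈ T', ∀ q ∈ T', χ p = χ q := by
  classical
  have hTne : T.Nonempty := Set.nonempty_of_ncard_ne_zero (by omega)
  set α := {x // x ∈ hTfin.toFinset} with hα
  haveI : Nonempty α := ⟨⟨hTne.choose, (Set.Finite.mem_toFinset _).mpr hTne.choose_spec⟩⟩
  obtain ⟨ι, hιf, hHJ⟩ := Combinatorics.Line.exists_mono_in_high_dimension α (Fin k)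
  haveI := hιf
  -- The basic evaluation map
  let Φ : (ι → α) → (ι → ℝ) → (Fin d → ℝ) := fun w ε => ∑ i, ε i • (w i).1
  have hΦ_single : ∀ (w : ι → α) (i0 : ι), Φ w (Pi.single i0 1) = (w i0).1 := by
    intro w i0
    simp only [Φ]
    rw [Finset.sum_eq_single i0]
    · simp
    · intro b _ hb; simp [Pi.single_eq_of_ne hb]
    · simp
  -- the coordinate polynomials
  let P : (ι → α) → (Fin d) → MvPolynomial ι ℝ := fun w j =>
    ∑ i, MvPolynomial.X i * MvPolynomial.C ((w i).1 j)
  have hPeval : ∀ w j ε, MvPolynomial.eval ε (P w j) = Φ w ε j := by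
    intro w j ε
    simp only [P, Φ]
    rw [map_sum, Finset.sum_apply]
    refine Finset.sum_congr rfl fun i _ => ?_
    simp [smul_eq_mul]
  -- choices of separating coordinates
  have hcoord : ∀ p : {p : (ι → α) × (ι → α) // p.1 ≠ p.2},
      ∃ i0 j0, (p.1.1 i0).1 j0 ≠ (p.1.2 i0).1 j0 := by
    rintro ⟨⟨w, w'⟩, hne⟩
    obtain ⟨i0, hi0⟩ := Function.ne_iff.mp hne
    have hv : (w i0).1 ≠ (w' i0).1 := fun h => hi0 (Subtype.ext h)
    obtain ⟨j0, hj0⟩ := Function.ne_iff.mp hv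
    exact ⟨i0, j0, hj0⟩
  let i0 : {p : (ι → α) × (ι → α) // p.1 ≠ p.2} → ι := fun p => (hcoord p).choose
  let j0 : {p : (ι → α) × (ι → α) // p.1 ≠ p.2} → Fin d :=
    fun p => (hcoord p).choose_spec.choose
  have hij : ∀ p : {p : (ι → α) × (ι → α) // p.1 ≠ p.2}, (p.1.1 (i0 p)).1 (j0 p) ≠ (p.1.2 (i0 p)).1 (j0 p) :=
    fun p => (hcoord p).choose_spec.choose_spec
  -- the family of nonzero polynomials
  let G : (Option ℕ × {p : (ι → α) × (ι → α) // p.1 ≠ p.2}) → MvPolynomial ι ℝ := fun j =>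
    Option.rec (P j.2.1.1 (j0 j.2) - P j.2.1.2 (j0 j.2))
      (fun n => MvPolynomial.eval₂ MvPolynomial.C (Sum.elim (P j.2.1.1) (P j.2.1.2)) (F n)) j.1
  have hGeval_none : ∀ (p : {p : (ι → α) × (ι → α) // p.1 ≠ p.2}) (ε : ι → ℝ), MvPolynomial.eval ε (G (none, p)) =
      Φ p.1.1 ε (j0 p) - Φ p.1.2 ε (j0 p) := by
    intro p ε
    simp only [G]
    rw [map_sub, hPeval, hPeval]
  have hGeval_some : ∀ (n : ℕ) (p : {p : (ι → α) × (ι → α) // p.1 ≠ p.2}) (ε : ι → ℝ), MvPolynomial.eval ε (G (some n, p)) =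
      MvPolynomial.eval (Sum.elim (Φ p.1.1 ε) (Φ p.1.2 ε)) (F n) := by
    intro n p ε
    simp only [G]
    rw [← MvPolynomial.eval_assoc]
    have harg : (⇑(MvPolynomial.eval ε) ∘ Sum.elim (P p.1.1) (P p.1.2))
        = Sum.elim (Φ p.1.1 ε) (Φ p.1.2 ε) := by
      funext s
      cases s with
      | inl j => simp [hPeval]
      | inr j => simp [hPeval]
    rw [harg]
  have hGne : ∀ j, G j ≠ 0 := by
    rintro ⟨o, p⟩ h
    cases o with
    | none =>
      have := hGeval_none p (Pi.single (i0 p) 1)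
      rw [h] at this
      rw [hΦ_single, hΦ_single] at this
      simp only [map_zero] at this
      exact hij p (by linarith [this.symm, sub_eq_zero.mp this.symm])
    | some n =>
      have := hGeval_some n p (Pi.single (i0 p) 1)
      rw [h] at this
      rw [hΦ_single, hΦ_single] at this
      simp only [map_zero] at this
      have hmem1 : (p.1.1 (i0 p)).1 ∈ T :=
        (Set.Finite.mem_toFinset _).mp (p.1.1 (i0 p)).2
      have hmem2 : (p.1.2 (i0 p)).1 ∈ T :=
        (Set.Finite.mem_toFinset _).mp (p.1.2 (i0 p)).2
      have hne : (p.1.1 (i0 p)).1 ≠ (p.1.2 (i0 p)).1 :=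
        fun h' => hij p (congrFun h' _)
      exact hF n _ hmem1 _ hmem2 hne this.symm
  obtain ⟨ε, hεpos, hεne⟩ := exists_good G hGne
  let Φε : (ι → α) → (Fin d → ℝ) := fun w => Φ w ε
  have hΦdist : ∀ w w' (hne : w ≠ w'), Φε w ≠ Φε w' := by
    intro w w' hne h
    have h2 := hεne (none, ⟨(w, w'), hne⟩)
    rw [hGeval_none] at h2
    exact h2 (by rw [show Φ w ε = Φ w' ε from h]; ring)
  refine ⟨Set.range Φε, Set.finite_range _, ?_, ?_⟩
  · rintro n p ⟨w, rfl⟩ q ⟨w', rfl⟩ hpq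
    have hne : w ≠ w' := fun h => hpq (by rw [h])
    have h2 := hεne (some n, ⟨(w, w'), hne⟩)
    rwa [hGeval_some] at h2
  · intro χ
    obtain ⟨l, c, hc⟩ := hHJ (fun w => χ (Φε w))
    let W : Finset ι := Finset.univ.filter (fun i => l.idxFun i = none)
    have hWne : W.Nonempty := by
      obtain ⟨i, hi⟩ := l.proper
      exact ⟨i, by simp [W, hi]⟩
    let a₀ : α := Classical.arbitrary α
    let lam : ℝ := ∑ i ∈ W, ε i
    have hlam : 0 < lam := Finset.sum_pos (fun i _ => hεpos i) hWne
    let pstar : Fin d → ℝ := ∑ i ∈ Wᶜ, ε i • ((l.idxFun i).getD a₀).1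
    have key : ∀ a : α, Φε (l a) = pstar + lam • a.1 := by
      intro a
      simp only [Φε, Φ]
      rw [← Finset.sum_add_sum_compl W]
      have h1 : ∑ i ∈ W, ε i • ((l a) i).1 = lam • a.1 := by
        rw [Finset.sum_smul]
        refine Finset.sum_congr rfl fun i hi => ?_
        have hnone : l.idxFun i = none := by simpa [W] using hi
        rw [Combinatorics.Line.apply_none _ _ _ hnone]
      have h2 : ∑ i ∈ Wᶜ, ε i • ((l a) i).1 = pstar := by
        refine Finset.sum_congr rfl fun i hi => ?_
        have hi' : l.idxFun i ≠ none := by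
          simpa [W] using (Finset.mem_compl.mp hi)
        obtain ⟨b, hb⟩ := Option.ne_none_iff_exists'.mp hi'
        simp [Combinatorics.Line.coe_apply, hb]
      rw [h1, h2, add_comm]
    refine ⟨(fun q => pstar + lam • q) '' T, ?_, ⟨pstar, lam, hlam, rfl⟩, ?_⟩
    · rintro _ ⟨q, hq, rfl⟩
      exact ⟨l ⟨q, (Set.Finite.mem_toFinset _).mpr hq⟩,
        key ⟨q, (Set.Finite.mem_toFinset _).mpr hq⟩⟩
    · rintro p ⟨qa, hqa, rfl⟩ p' ⟨qb, hqb, rfl⟩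
      have k1 : Φε (l ⟨qa, (Set.Finite.mem_toFinset _).mpr hqa⟩) = pstar + lam • qa :=
        key ⟨qa, (Set.Finite.mem_toFinset _).mpr hqa⟩
      have k2 : Φε (l ⟨qb, (Set.Finite.mem_toFinset _).mpr hqb⟩) = pstar + lam • qb :=
        key ⟨qb, (Set.Finite.mem_toFinset _).mpr hqb⟩
      show χ (pstar + lam • qa) = χ (pstar + lam • qb)
      rw [← k1, ← k2]
      exact (hc _).trans (hc _).symm
end

section
/- For every finite set T ⊂ R^d and every positive integer k, there exists a finite set X ⊂ R^d such that every k-coloring of X contains a monochromatic homothetic copy of T. -/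
theorem stmt_13 (d : ℕ) (T : Set (Fin d → ℝ)) (hT : T.Finite) (k : ℕ) (hk : 0 < k) :
    ∃ X : Set (Fin d → ℝ), X.Finite ∧
      ∀ χ : (Fin d → ℝ) → Fin k, ∃ T' ⊆ X,
        (∃ (p : Fin d → ℝ) (l : ℝ), 0 < l ∧ T' = (fun q => p + l • q) '' T) ∧
        ∀ p ∈ T', ∀ q ∈ T', χ p = χ q := by
  classical
  obtain rfl | ⟨t0, ht0⟩ := T.eq_empty_or_nonempty
  · exact ⟨∅, Set.finite_empty, fun χ =>
      ⟨∅, Set.Subset.rfl, ⟨0, 1, one_pos, by simp⟩, by simp⟩⟩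
  obtain ⟨ι, _inst, hι⟩ :=
    Combinatorics.Line.exists_mono_in_high_dimension (↥hT.toFinset) (Fin k)
  set F : (↥hT.toFinset) → (Fin d → ℝ) := fun a => (a : Fin d → ℝ) with hF
  refine ⟨Set.range (fun w : ι → ↥hT.toFinset => ∑ i, F (w i)), Set.finite_range _,
    fun χ => ?_⟩
  obtain ⟨l, c0, hl⟩ := hι (fun w => χ (∑ i, F (w i)))
  set M : Finset ι := Finset.univ.filter (fun i => l.idxFun i = none) with hMdef
  have hM : M.Nonempty := ⟨l.proper.choose, by simp [hMdef, l.proper.choose_spec]⟩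
  set x0 : ↥hT.toFinset := ⟨t0, hT.mem_toFinset.2 ht0⟩ with hx0
  set p : Fin d → ℝ := ∑ i ∈ Mᶜ, F ((l.idxFun i).getD x0) with hp
  set c : ℕ := M.card with hcard
  have hc : 0 < c := Finset.card_pos.2 hM
  have key : ∀ x : ↥hT.toFinset, ∑ i, F (l x i) = p + (c : ℝ) • F x := by
    intro x
    have h1 : ∑ i ∈ M, F (l x i) + ∑ i ∈ Mᶜ, F (l x i) = ∑ i, F (l x i) :=
      Finset.sum_add_sum_compl M _
    have h2 : ∑ i ∈ M, F (l x i) = (c : ℝ) • F x := by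
      rw [Finset.sum_congr rfl (fun i hi => ?_), Finset.sum_const,
        Nat.cast_smul_eq_nsmul]
      have : l.idxFun i = none := by simpa [hMdef] using hi
      simp [Combinatorics.Line.apply_def, this]
    have h3 : ∑ i ∈ Mᶜ, F (l x i) = p := by
      refine Finset.sum_congr rfl (fun i hi => ?_)
      have : l.idxFun i ≠ none := by simpa [hMdef] using hi
      obtain ⟨a, ha⟩ := Option.ne_none_iff_exists'.1 this
      simp [Combinatorics.Line.apply_def, ha]
    rw [← h1, h2, h3, add_comm]
  refine ⟨(fun q => p + (c : ℝ) • q) '' T, ?_, ⟨p, (c : ℝ), by exact_mod_cast hc, rfl⟩, ?_⟩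
  · rintro _ ⟨q, hq, rfl⟩
    refine ⟨l ⟨q, hT.mem_toFinset.2 hq⟩, ?_⟩
    simpa using key ⟨q, hT.mem_toFinset.2 hq⟩
  · have hmono : ∀ a ∈ (fun q => p + (c : ℝ) • q) '' T, χ a = c0 := by
      rintro _ ⟨q, hq, rfl⟩
      have := hl ⟨q, hT.mem_toFinset.2 hq⟩
      beta_reduce at this
      rw [key ⟨q, hT.mem_toFinset.2 hq⟩] at this
      simpa using this
    intro a ha b hb
    rw [hmono a ha, hmono b hb]
end
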